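/- Let A and B be m × n integer matrices. Suppose there exist integer matrices M and N (of size m × m) with MA = B and NB = A. Then there exists T ∈ GL(m, ℤ) with TA = B. -/

import Mathlib

open LinearMap Module Matrix

/-- Splitting equivalence: a surjection with a linear section splits the domain as
kernel × codomain. -/
noncomputable def splitEquivAux {R M L : Type*} [CommRing R] [AddCommGroup M] [Module R M]
    [AddCommGroup L] [Module R L] (f : M →ₗ[R] L) (s : L →ₗ[R] M)
    (hs : f ∘ₗ s = LinearMap.id) : M ≃ₗ[R] (LinearMap.ker f × L) :=
  LinearEquiv.ofLinear
    (LinearMap.prod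
      (LinearMap.codRestrict (LinearMap.ker f) (LinearMap.id - s ∘ₗ f) (by
        intro x
        have h : f (s (f x)) = f x := congrArg (fun g => g (f x)) hs
        simp [LinearMap.mem_ker, h]))
      f)
    ((LinearMap.ker f).subtype ∘ₗ LinearMap.fst R _ L + s ∘ₗ LinearMap.snd R _ L)
    (by
      apply LinearMap.ext
      rintro ⟨⟨x, hx⟩, l⟩
      have hx0 : f x = 0 := hx
      have hsl : f (s l) = l := congrArg (fun g => g l) hs
      apply Prod.ext
      · apply Subtype.ext
        simp [hx0, hsl]
      · simp [hx0, hsl])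
    (by
      apply LinearMap.ext
      intro x
      have hsfx : f (s (f x)) = f x := congrArg (fun g => g (f x)) hs
      simp [hsfx])

theorem splitEquivAux_snd {R M L : Type*} [CommRing R] [AddCommGroup M] [Module R M]
    [AddCommGroup L] [Module R L] (f : M →ₗ[R] L) (s : L →ₗ[R] M)
    (hs : f ∘ₗ s = LinearMap.id) (x : M) : (splitEquivAux f s hs x).2 = f x := rfl

/-- Two surjections from a finite free module over a PID onto a common module
differ by an automorphism of the source. -/
theorem exists_linearEquiv_comp_eq {R M L : Type*} [CommRing R] [IsDomain R]
    [IsPrincipalIdealRing R] [AddCommGroup M] [Module R M]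
    [Module.Free R M] [Module.Finite R M] [AddCommGroup L] [Module R L]
    [Module.Free R L] [Module.Finite R L]
    (f g : M →ₗ[R] L) (hf : Function.Surjective f) (hg : Function.Surjective g) :
    ∃ S : M ≃ₗ[R] M, f ∘ₗ (S : M →ₗ[R] M) = g := by
  obtain ⟨sf, hsf⟩ := Module.projective_lifting_property f LinearMap.id hf
  obtain ⟨sg, hsg⟩ := Module.projective_lifting_property g LinearMap.id hg
  let ψf := splitEquivAux f sf hsf
  let ψg := splitEquivAux g sg hsg
  haveI : Module.Finite R ↥(LinearMap.ker f) :=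
    Module.Finite.iff_fg.mpr (IsNoetherian.noetherian (LinearMap.ker f))
  haveI : Module.Finite R ↥(LinearMap.ker g) :=
    Module.Finite.iff_fg.mpr (IsNoetherian.noetherian (LinearMap.ker g))
  haveI : Module.Free R ↥(LinearMap.ker f) := Module.free_of_finite_type_torsion_free'
  haveI : Module.Free R ↥(LinearMap.ker g) := Module.free_of_finite_type_torsion_free'
  let bf := Module.Free.chooseBasis R ↥(LinearMap.ker f)
  let bg := Module.Free.chooseBasis R ↥(LinearMap.ker g)
  let bL := Module.Free.chooseBasis R L
  have h1 : Module.finrank R M =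
      Fintype.card (Module.Free.ChooseBasisIndex R ↥(LinearMap.ker f) ⊕
        Module.Free.ChooseBasisIndex R L) :=
    Module.finrank_eq_card_basis ((bf.prod bL).map ψf.symm)
  have h2 : Module.finrank R M =
      Fintype.card (Module.Free.ChooseBasisIndex R ↥(LinearMap.ker g) ⊕
        Module.Free.ChooseBasisIndex R L) :=
    Module.finrank_eq_card_basis ((bg.prod bL).map ψg.symm)
  rw [Fintype.card_sum] at h1 h2
  have hcard : Fintype.card (Module.Free.ChooseBasisIndex R ↥(LinearMap.ker f)) =
      Fintype.card (Module.Free.ChooseBasisIndex R ↥(LinearMap.ker g)) := by omega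
  let e : ↥(LinearMap.ker f) ≃ₗ[R] ↥(LinearMap.ker g) :=
    bf.equiv bg (Fintype.equivOfCardEq hcard)
  refine ⟨ψg.trans ((e.symm.prodCongr (LinearEquiv.refl R L)).trans ψf.symm), ?_⟩
  ext x
  have key : f ((ψf.symm) ((e.symm.prodCongr (LinearEquiv.refl R L)) (ψg x))) =
      ((ψf ((ψf.symm) ((e.symm.prodCongr (LinearEquiv.refl R L)) (ψg x))))).2 :=
    (splitEquivAux_snd f sf hsf _).symm
  simp only [LinearMap.coe_comp, Function.comp_apply, LinearEquiv.coe_coe,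
    LinearEquiv.trans_apply, key, LinearEquiv.apply_symm_apply]
  have h3 : (ψg x).2 = g x := splitEquivAux_snd g sg hsg x
  simpa using h3

/-- If two `m × n` integer matrices `A`, `B` satisfy
`M * A = B` and `N * B = A` for some integer matrices `M`, `N`, then
`T * A = B` for some `T ∈ GL(m, ℤ)`. -/
theorem unimodular_of_mutual_left_multiples (m n : ℕ)
    (A B : Matrix (Fin m) (Fin n) ℤ) (M N : Matrix (Fin m) (Fin m) ℤ)
    (hM : M * A = B) (hN : N * B = A) :
    ∃ T : Matrix (Fin m) (Fin m) ℤ, IsUnit T.det ∧ T * A = B := by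
  classical
  set φA := A.vecMulLinear with hφA
  set φB := B.vecMulLinear with hφB
  have hBA : ∀ x, φB x = φA (M.vecMulLinear x) := by
    intro x
    simp [hφA, hφB, ← hM, ← Matrix.vecMul_vecMul]
  have hAB : ∀ x, φA x = φB (N.vecMulLinear x) := by
    intro x
    simp [hφA, hφB, ← hN, ← Matrix.vecMul_vecMul]
  set L := LinearMap.range φA with hL
  have hBmem : ∀ x, φB x ∈ L := fun x => ⟨M.vecMulLinear x, (hBA x).symm⟩
  let πA : (Fin m → ℤ) →ₗ[ℤ] L := φA.rangeRestrict
  let πB : (Fin m → ℤ) →ₗ[ℤ] L := φB.codRestrict L hBmem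
  have hπA : Function.Surjective πA := LinearMap.surjective_rangeRestrict φA
  have hπB : Function.Surjective πB := by
    rintro ⟨y, x, rfl⟩
    exact ⟨N.vecMulLinear x, Subtype.ext (hAB x).symm⟩
  obtain ⟨S, hS⟩ := exists_linearEquiv_comp_eq πA πB hπA hπB
  refine ⟨(LinearMap.toMatrix' S.toLinearMap)ᵀ, ?_, ?_⟩
  · have hcomp : S.toLinearMap ∘ₗ S.symm.toLinearMap = LinearMap.id := by
      ext x; simp
    have h1 : LinearMap.toMatrix' S.toLinearMap *
        LinearMap.toMatrix' S.symm.toLinearMap = 1 := by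
      rw [← LinearMap.toMatrix'_comp, hcomp, LinearMap.toMatrix'_id]
    rw [Matrix.det_transpose]
    exact IsUnit.of_mul_eq_one _ (by rw [← Matrix.det_mul, h1, Matrix.det_one])
  · have key : ∀ x : Fin m → ℤ,
        x ᵥ* ((LinearMap.toMatrix' S.toLinearMap)ᵀ * A) = x ᵥ* B := by
      intro x
      rw [← Matrix.vecMul_vecMul, Matrix.vecMul_transpose]
      have hmv : (LinearMap.toMatrix' S.toLinearMap) *ᵥ x = S x := by
        calc (LinearMap.toMatrix' S.toLinearMap) *ᵥ x
            = Matrix.toLin' (LinearMap.toMatrix' S.toLinearMap) x := rfl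
          _ = S x := by rw [Matrix.toLin'_toMatrix']; rfl
      rw [hmv]
      have hcomp : πA (S x) = πB x := congrArg (fun h => h x) hS
      have hval := congrArg (Subtype.val) hcomp
      simpa [πA, πB, φA, φB] using hval
    ext i j
    have hkey := congrFun (key (Pi.single i 1)) j
    simpa [Matrix.vecMul, dotProduct, Pi.single_apply, Finset.sum_ite_eq]
      using hkey
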